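/- A left ideal I of the free monoid A* is dense if and only if every infinite word W : ℕ → A has some initial segment belonging to I. -/

import Mathlib

/-- A subset `I` of the free monoid `A*` (words as lists, multiplication is concatenation)
is a left ideal if `u ++ w ∈ I` whenever `w ∈ I`. -/
def IsLeftIdeal {A : Type*} (I : Set (List A)) : Prop :=
  ∀ u w : List A, w ∈ I → u ++ w ∈ I

/-- A subset of `A*` is closed if it is a left ideal, and contains `w` whenever it contains
`a :: w` for every letter `a`. -/
def IsClosedSubset {A : Type*} (C : Set (List A)) : Prop :=
  IsLeftIdeal C ∧ ∀ w : List A, (∀ a : A, (a :: w) ∈ C) → w ∈ C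

/-- A left ideal is dense if the only closed subset containing it is all of `A*`. -/
def IsDenseIdeal {A : Type*} (I : Set (List A)) : Prop :=
  ∀ C : Set (List A), IsClosedSubset C → I ⊆ C → C = Set.univ

/-- The initial segment `W(n-1) W(n-2) ⋯ W(0)` of an infinite word `W : ℕ → A`:
letters are appended on the left. -/
def initSeg {A : Type*} (W : ℕ → A) : ℕ → List A
  | 0 => []
  | n + 1 => W n :: initSeg W n

/-- A left ideal `I ≤ A*` is dense iff every infinite word has an initial segment in `I`. -/
lemma initSeg_shift {A : Type*} (W : ℕ → A) (w : List A) (n : ℕ) :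
    initSeg (fun k => W (k + 1)) n ++ (W 0 :: w) = initSeg W (n + 1) ++ w := by
  induction n with
  | zero => simp [initSeg]
  | succ n ih => simp only [initSeg, List.cons_append, ih]

/-- A left ideal `I ≤ A*` is dense iff every infinite word has an initial segment in `I`. -/
theorem stmt_5 {A : Type*} (I : Set (List A)) (hI : IsLeftIdeal I) :
    IsDenseIdeal I ↔ ∀ W : ℕ → A, ∃ n : ℕ, initSeg W n ∈ I := by
  constructor
  · intro hd W
    set C : Set (List A) := {w | ∀ V : ℕ → A, ∃ n, initSeg V n ++ w ∈ I} with hCdef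
    have hsingle : ∀ (a : A) (w : List A), w ∈ C → (a :: w) ∈ C := by
      intro a w hw V
      obtain ⟨n, hn⟩ := hw (fun k => Nat.rec a (fun j _ => V j) k)
      match n with
      | 0 =>
        refine ⟨0, ?_⟩
        simp only [initSeg, List.nil_append] at hn ⊢
        simpa using hI [a] w hn
      | m + 1 =>
        refine ⟨m, ?_⟩
        have hs := initSeg_shift (fun k => Nat.rec a (fun j _ => V j) k) w m
        exact hs ▸ hn
    have hCclosed : IsClosedSubset C := by
      constructor
      · intro u w hw
        induction u with
        | nil => exact hw
        | cons a u ih => exact hsingle a _ ih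
      · intro w h V
        obtain ⟨n, hn⟩ := h (V 0) (fun k => V (k + 1))
        exact ⟨n + 1, initSeg_shift V w n ▸ hn⟩
    have hsub : I ⊆ C := by
      intro w hw V
      exact ⟨0, by simpa [initSeg] using hw⟩
    have := hd C hCclosed hsub
    have hnil : ([] : List A) ∈ C := this ▸ Set.mem_univ _
    obtain ⟨n, hn⟩ := hnil W
    exact ⟨n, by simpa using hn⟩
  · intro h C hC hsub
    suffices hnil : ([] : List A) ∈ C by
      ext w
      simp only [Set.mem_univ, iff_true]
      simpa using hC.1 w [] hnil
    by_contra hne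
    by_cases hA : Nonempty A
    · have key : ∀ w : List A, ∃ a : A, w ∉ C → (a :: w) ∉ C := by
        intro w
        by_cases hw : w ∈ C
        · exact ⟨Classical.arbitrary A, fun h' => absurd hw h'⟩
        · by_contra hall
          push_neg at hall
          exact hw (hC.2 w fun a => (hall a).2)
      choose g hg using key
      let f : ℕ → List A := fun n => Nat.rec ([] : List A) (fun _ w => g w :: w) n
      have hf : ∀ n, f n ∉ C := by
        intro n
        induction n with
        | zero => exact hne
        | succ n ih => exact hg (f n) ih
      have hfi : ∀ n, f n = initSeg (fun n => g (f n)) n := by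
        intro n
        induction n with
        | zero => rfl
        | succ n ih => simp only [initSeg, ← ih]; rfl
      obtain ⟨n, hn⟩ := h (fun n => g (f n))
      exact hf n (by rw [hfi n]; exact hsub hn)
    · exact hne (hC.2 [] fun a => absurd ⟨a⟩ hA)
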